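/- arXiv:1007.1296 — 3 statements merged into one kernel-verified Lean document; each statement's English description precedes it below -/
import Mathlib

section
/- Let R be a commutative Noetherian ring and X a finitely generated R-module. Then there is an inclusion-reversing bijection between the finite length R-submodules of X and the finite length factor modules of the Matlis dual DX, given by Y ↦ DY, where D = Hom_R(-, E) with E the direct sum of injective hulls E(R/m) over all maximal ideals m. -/
noncomputable section

universe u

/-- `E` is an injective hull of the `R`-module `A`: `E` is injective and contains `A`
as an essential submodule. -/
def IsInjectiveHull (R : Type u) [CommRing R] (A : Type u) [AddCommGroup A] [Module R A]
    (E : Type u) [AddCommGroup E] [Module R E] : Prop :=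
  Module.Injective R E ∧ ∃ f : A →ₗ[R] E, Function.Injective f ∧
    ∀ N : Submodule R E, N ≠ ⊥ → ∃ x ∈ N, x ≠ 0 ∧ x ∈ LinearMap.range f

/-- The submodule of `Hom_R(X, E)` of maps vanishing on the submodule `Y ≤ X`;
the quotient by it is the Matlis dual `D Y = Hom_R(Y, E)` of `Y`. -/
def annihilatorOf (R : Type u) [CommRing R] {X E : Type u} [AddCommGroup X] [Module R X]
    [AddCommGroup E] [Module R E] (Y : Submodule R X) : Submodule R (X →ₗ[R] E) where
  carrier := {g | ∀ y ∈ Y, g y = 0}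
  add_mem' := by intro a b ha hb y hy; simp [ha y hy, hb y hy]
  zero_mem' := by intro y hy; simp
  smul_mem' := by intro c g hg y hy; simp [hg y hy]

namespace Stmt9Aux
variable {R : Type u} [CommRing R] {E : Type u} [AddCommGroup E] [Module R E]

section Unit
variable [DecidableEq (MaximalSpectrum R)]
  (f : DirectSum (MaximalSpectrum R) (fun m => R ⧸ m.asIdeal) →ₗ[R] E)

/-- the canonical nonzero `m`-torsion element of `E` -/
def uelem (M : MaximalSpectrum R) : E := f (DirectSum.lof R _ _ M 1)

theorem uelem_ne_zero (hf : Function.Injective f) (M : MaximalSpectrum R) :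
    uelem f M ≠ 0 := by
  intro h
  have h0 : DirectSum.lof R (MaximalSpectrum R) (fun m => (R ⧸ m.asIdeal)) M 1 = 0 := by
    apply hf
    simpa [uelem] using h
  have h1 : (1 : R ⧸ M.asIdeal) = 0 := by
    have := congrArg (fun v => v M) h0
    simpa [DirectSum.lof_eq_of, DirectSum.of_eq_same] using this
  exact M.isMaximal.ne_top ((Ideal.eq_top_iff_one _).mpr (Ideal.Quotient.eq_zero_iff_mem.mp h1))

theorem smul_uelem (M : MaximalSpectrum R) {r : R} (hr : r ∈ M.asIdeal) :
    r • uelem f M = 0 := by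
  have h1 : (r • (1 : R ⧸ M.asIdeal)) = 0 := by
    have h2 : (1 : R ⧸ M.asIdeal) = Submodule.Quotient.mk (1 : R) := rfl
    rw [h2, ← Submodule.Quotient.mk_smul, Submodule.Quotient.mk_eq_zero]
    simpa using hr
  rw [uelem, ← map_smul, ← map_smul, h1, map_zero, map_zero]

end Unit

theorem cogen (hE : IsInjectiveHull R (DirectSum (MaximalSpectrum R)
      fun m => R ⧸ m.asIdeal) E)
    {W : Type u} [AddCommGroup W] [Module R W] {w : W} (hw : w ≠ 0) :
    ∃ φ : W →ₗ[R] E, φ w ≠ 0 := by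
  classical
  obtain ⟨hInj, f, hf, -⟩ := hE
  set a := LinearMap.ker (LinearMap.toSpanSingleton R W w) with ha
  have hane : a ≠ ⊤ := by
    intro h
    apply hw
    have h1 : (1 : R) ∈ a := h ▸ Submodule.mem_top
    rw [ha, LinearMap.mem_ker, LinearMap.toSpanSingleton_apply, one_smul] at h1
    exact h1
  obtain ⟨m, hm, ham⟩ := Ideal.exists_le_maximal a hane
  let M : MaximalSpectrum R := ⟨m, hm⟩
  let u : E := uelem f M
  have hu : u ≠ 0 := uelem_ne_zero f hf M
  have hψle : a ≤ LinearMap.ker (LinearMap.toSpanSingleton R E u) := fun r hr => by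
    simp only [LinearMap.mem_ker, LinearMap.toSpanSingleton_apply]
    exact smul_uelem f M (ham hr)
  let ψ : (R ⧸ a) →ₗ[R] E := Submodule.liftQ a (LinearMap.toSpanSingleton R E u) hψle
  let ι : (R ⧸ a) →ₗ[R] W := Submodule.liftQ a (LinearMap.toSpanSingleton R W w) le_rfl
  have hι : Function.Injective ι := by
    rw [← LinearMap.ker_eq_bot]
    exact Submodule.ker_liftQ_eq_bot a _ _ le_rfl
  obtain ⟨φ, hφ⟩ := hInj.out ι hι ψ
  refine ⟨φ, ?_⟩
  have h1 : ι (a.mkQ 1) = w := by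
    have h : ι.comp a.mkQ = LinearMap.toSpanSingleton R W w := Submodule.liftQ_mkQ _ _ _
    have h' := congrArg (fun (t : R →ₗ[R] W) => t 1) h
    simpa using h'
  have h2 : ψ (a.mkQ 1) = u := by
    have h : ψ.comp a.mkQ = LinearMap.toSpanSingleton R E u := Submodule.liftQ_mkQ _ _ _
    have h' := congrArg (fun (t : R →ₗ[R] E) => t 1) h
    simpa using h'
  have h3 := hφ (a.mkQ 1)
  rw [h1, h2] at h3
  rw [h3]
  exact hu



theorem smul_one_quot (I : Ideal R) (c : R) :
    c • (1 : R ⧸ I) = Ideal.Quotient.mk I c := by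
  have h : (1 : R ⧸ I) = Submodule.Quotient.mk (1 : R) := rfl
  rw [h, ← Submodule.Quotient.mk_smul, smul_eq_mul, mul_one]
  rfl

theorem mem_span_uelem [DecidableEq (MaximalSpectrum R)]
    {f : DirectSum (MaximalSpectrum R) (fun m => R ⧸ m.asIdeal) →ₗ[R] E}
    (hf : Function.Injective f)
    (hess : ∀ N : Submodule R E, N ≠ ⊥ → ∃ x ∈ N, x ≠ 0 ∧ x ∈ LinearMap.range f)
    (M : MaximalSpectrum R) {e : E} (he : ∀ r ∈ M.asIdeal, r • e = 0) :
    e ∈ Submodule.span R {uelem f M} := by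
  by_cases h0 : e = 0
  · simp [h0]
  have hN : Submodule.span R {e} ≠ ⊥ := by
    simpa [Submodule.span_singleton_eq_bot] using h0
  obtain ⟨x, hxmem, hx0, a, ha⟩ := hess _ hN
  obtain ⟨r, hr⟩ := Submodule.mem_span_singleton.mp hxmem
  -- x is killed by the maximal ideal
  have hx : ∀ t ∈ M.asIdeal, t • x = 0 := by
    intro t ht
    rw [← hr, smul_comm, he t ht, smul_zero]
  have hma : ∀ t ∈ M.asIdeal, t • a = 0 := by
    intro t ht
    apply hf
    rw [map_smul, ha, map_zero, hx t ht]
  -- a is concentrated at M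
  have hcomp : ∀ N : MaximalSpectrum R, N ≠ M → a N = 0 := by
    intro N hNM
    by_contra hN0
    obtain ⟨c, hc⟩ := Ideal.Quotient.mk_surjective (a N)
    have hcn : c ∉ N.asIdeal := by
      intro h
      exact hN0 (by rw [← hc, Ideal.Quotient.eq_zero_iff_mem]; exact h)
    have hMN : M.asIdeal ≤ N.asIdeal := by
      intro t ht
      have h1 : t • a N = 0 := by
        have := congrArg (fun v => v N) (hma t ht)
        simpa [DirectSum.smul_apply] using this
      have h2 : Ideal.Quotient.mk N.asIdeal (t * c) = 0 := by
        have h3 : (Ideal.Quotient.mk N.asIdeal (t * c)) = t • a N := by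
          rw [← hc]
          rfl
        rw [h3, h1]
      rw [Ideal.Quotient.eq_zero_iff_mem] at h2
      exact (N.isMaximal.isPrime.mem_or_mem h2).resolve_right hcn
    have heq : M.asIdeal = N.asIdeal := M.isMaximal.eq_of_le N.isMaximal.ne_top hMN
    exact hNM (MaximalSpectrum.ext heq.symm)
  obtain ⟨c, hc⟩ := Ideal.Quotient.mk_surjective (a M)
  have ha_eq : a = c • DirectSum.lof R (MaximalSpectrum R) (fun m => R ⧸ m.asIdeal) M 1 := by
    have h1 : (c • DirectSum.lof R (MaximalSpectrum R) (fun m => R ⧸ m.asIdeal) M 1)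
        = DirectSum.lof R (MaximalSpectrum R) (fun m => R ⧸ m.asIdeal) M (a M) := by
      rw [← map_smul]
      congr 1
      rw [← hc, smul_one_quot]
    rw [h1, DirectSum.lof_eq_of]
    refine DFinsupp.ext fun N => ?_
    by_cases hNM : N = M
    · subst hNM
      rw [DirectSum.of_eq_same]
    · rw [DirectSum.of_eq_of_ne _ _ _ hNM, hcomp N hNM]
  -- now x = c • u
  have hxu : x = c • uelem f M := by
    rw [← ha, ha_eq, map_smul]
    rfl
  -- r ∉ m since r • e = x ≠ 0
  have hrm : r ∉ M.asIdeal := by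
    intro h
    exact hx0 (by rw [← hr, he r h])
  obtain ⟨y, i, hi, hyi⟩ := M.isMaximal.exists_inv hrm
  have : e = (y * c) • uelem f M := by
    calc e = (y * r + i) • e := by rw [hyi, one_smul]
    _ = y • (r • e) + i • e := by rw [add_smul, mul_smul]
    _ = y • x + 0 := by rw [hr, he i hi]
    _ = (y * c) • uelem f M := by rw [add_zero, hxu, ← mul_smul]
  exact Submodule.mem_span_singleton.mpr ⟨y * c, this.symm⟩

theorem fl_iff {M : Type u} [AddCommGroup M] [Module R M] :
    IsFiniteLength R M ↔ IsNoetherian R M ∧ IsArtinian R M :=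
  isFiniteLength_iff_isNoetherian_isArtinian

def perp {X : Type u} [AddCommGroup X] [Module R X] (K : Submodule R (X →ₗ[R] E)) :
    Submodule R X where
  carrier := {x | ∀ g ∈ K, g x = 0}
  add_mem' := by intro a b ha hb g hg; simp [ha g hg, hb g hg]
  zero_mem' := by intro g hg; simp
  smul_mem' := by intro c x hx g hg; simp [hx g hg]

theorem mem_perp {X : Type u} [AddCommGroup X] [Module R X] {K : Submodule R (X →ₗ[R] E)}
    {x : X} : x ∈ perp K ↔ ∀ g ∈ K, g x = 0 := Iff.rfl

theorem ext_of_injective (hInj : Module.Injective R E) {W : Type u} [AddCommGroup W] [Module R W]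
    (p : Submodule R W) (h : ↥p →ₗ[R] E) : ∃ g : W →ₗ[R] E, ∀ x : ↥p, g x = h x :=
  hInj.out p.subtype (Submodule.injective_subtype p) h

theorem factor_of_surjective {A B C : Type u} [AddCommGroup A] [Module R A] [AddCommGroup B]
    [Module R B] [AddCommGroup C] [Module R C] (f : A →ₗ[R] B) (hf : Function.Surjective f)
    (ξ : A →ₗ[R] C) (hker : LinearMap.ker f ≤ LinearMap.ker ξ) :
    ∃ η : B →ₗ[R] C, ∀ a, η (f a) = ξ a := by
  refine ⟨((LinearMap.ker f).liftQ ξ hker) ∘ₗ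
    (f.quotKerEquivOfSurjective hf).symm.toLinearMap, fun a => ?_⟩
  have h1 : (f.quotKerEquivOfSurjective hf).symm (f a) = Submodule.Quotient.mk a := by
    rw [LinearEquiv.symm_apply_eq]
    rfl
  simp [h1]

theorem fl_ext {B : Type u} [AddCommGroup B] [Module R B] (S : Submodule R B)
    (h1 : IsFiniteLength R S) (h2 : IsFiniteLength R (B ⧸ S)) : IsFiniteLength R B := by
  rw [fl_iff] at h1 h2 ⊢
  exact ⟨(isNoetherian_iff_submodule_quotient S).mpr ⟨h1.1, h2.1⟩,
    (isArtinian_iff_submodule_quotient S).mpr ⟨h1.2, h2.2⟩⟩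

theorem fl_of_simple {S : Type u} [AddCommGroup S] [Module R S] (hS : IsSimpleModule R S) :
    IsFiniteLength R S := by
  haveI := hS
  haveI : IsSimpleModule R (S ⧸ (⊥ : Submodule R S)) :=
    IsSimpleModule.congr (Submodule.quotEquivOfEqBot (⊥ : Submodule R S) rfl)
  exact .of_simple_quotient (N := (⊥ : Submodule R S)) .of_subsingleton

theorem simple_struct (hE : IsInjectiveHull R (DirectSum (MaximalSpectrum R)
      fun m => R ⧸ m.asIdeal) E)
    (S : Type u) [AddCommGroup S] [Module R S] (hS : IsSimpleModule R S) :
    (∀ ξ : (S →ₗ[R] E) →ₗ[R] E, ∃ s : S, ∀ g : S →ₗ[R] E, ξ g = g s) ∧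
    IsFiniteLength R (S →ₗ[R] E) := by
  classical
  haveI := hS
  obtain ⟨hInj, f, hf, hess⟩ := hE
  haveI := IsSimpleModule.nontrivial (R := R) (M := S)
  obtain ⟨w₀, hw₀⟩ := exists_ne (0 : S)
  set m : Ideal R := LinearMap.ker (LinearMap.toSpanSingleton R S w₀) with hm_def
  have hm : m.IsMaximal := IsSimpleModule.ker_toSpanSingleton_isMaximal R hw₀
  let M : MaximalSpectrum R := ⟨m, hm⟩
  set u : E := uelem f M with hu_def
  have hu0 : u ≠ 0 := uelem_ne_zero f hf M
  have hmu : ∀ r ∈ m, r • u = 0 := fun r hr => smul_uelem f M hr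
  let σ : (R ⧸ m) ≃ₗ[R] S := (LinearMap.toSpanSingleton R S w₀).quotKerEquivOfSurjective
    (IsSimpleModule.toSpanSingleton_surjective R hw₀)
  let ψ : (R ⧸ m) →ₗ[R] E := Submodule.liftQ m (LinearMap.toSpanSingleton R E u)
    (fun r hr => by
      simp only [LinearMap.mem_ker, LinearMap.toSpanSingleton_apply]
      exact hmu r hr)
  let g₀ : S →ₗ[R] E := ψ ∘ₗ (σ.symm : S →ₗ[R] (R ⧸ m))
  have hσ1 : σ (m.mkQ 1) = w₀ := by
    have h1 : σ (m.mkQ 1) = LinearMap.toSpanSingleton R S w₀ 1 := rfl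
    rw [h1, LinearMap.toSpanSingleton_apply, one_smul]
  have hg₀w₀ : g₀ w₀ = u := by
    have h1 : σ.symm w₀ = m.mkQ 1 := by
      rw [LinearEquiv.symm_apply_eq]
      exact hσ1.symm
    show ψ (σ.symm w₀) = u
    rw [h1]
    have h2 : ψ (m.mkQ 1) = LinearMap.toSpanSingleton R E u 1 := rfl
    rw [h2, LinearMap.toSpanSingleton_apply, one_smul]
  have hspan : Submodule.span R {w₀} = ⊤ := IsSimpleModule.span_singleton_eq_top R hw₀
  have hrw₀ : ∀ r ∈ m, r • w₀ = 0 := by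
    intro r hr
    rw [hm_def] at hr
    simpa using hr
  have hmul : ∀ g : S →ₗ[R] E, ∃ c : R, g = c • g₀ := by
    intro g
    have hkill : ∀ r ∈ m, r • (g w₀) = 0 := by
      intro r hr
      rw [← map_smul, hrw₀ r hr, map_zero]
    obtain ⟨c, hc⟩ := Submodule.mem_span_singleton.mp (mem_span_uelem hf hess M hkill)
    refine ⟨c, LinearMap.ext_on hspan ?_⟩
    intro x hx
    rw [Set.mem_singleton_iff] at hx
    subst hx
    rw [LinearMap.smul_apply, hg₀w₀, hc]
  have hrg₀ : ∀ r ∈ m, r • g₀ = 0 := by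
    intro r hr
    refine LinearMap.ext_on hspan ?_
    intro x hx
    rw [Set.mem_singleton_iff] at hx
    subst hx
    rw [LinearMap.smul_apply, hg₀w₀, LinearMap.zero_apply]
    exact hmu r hr
  constructor
  · intro ξ
    have hkill : ∀ r ∈ m, r • (ξ g₀) = 0 := by
      intro r hr
      rw [← map_smul, hrg₀ r hr, map_zero]
    obtain ⟨c, hc⟩ := Submodule.mem_span_singleton.mp (mem_span_uelem hf hess M hkill)
    refine ⟨c • w₀, fun g => ?_⟩
    obtain ⟨d, rfl⟩ := hmul g
    rw [map_smul, ← hc, LinearMap.smul_apply, map_smul, hg₀w₀, hu_def]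
  · have hle : m ≤ LinearMap.ker (LinearMap.toSpanSingleton R (S →ₗ[R] E) g₀) := by
      intro r hr
      simp only [LinearMap.mem_ker, LinearMap.toSpanSingleton_apply]
      exact hrg₀ r hr
    let β : (R ⧸ m) →ₗ[R] (S →ₗ[R] E) :=
      Submodule.liftQ m (LinearMap.toSpanSingleton R (S →ₗ[R] E) g₀) hle
    have hβ : Function.Surjective β := by
      intro g
      obtain ⟨c, hc⟩ := hmul g
      refine ⟨m.mkQ c, ?_⟩
      have h1 : β (m.mkQ c) = LinearMap.toSpanSingleton R (S →ₗ[R] E) g₀ c := rfl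
      rw [h1, LinearMap.toSpanSingleton_apply, ← hc]
    haveI : IsSimpleModule R (R ⧸ m) := isSimpleModule_iff_isCoatom.mpr (Ideal.isMaximal_def.mp hm)
    have hfl : IsFiniteLength R (R ⧸ m) := fl_of_simple inferInstance
    rw [fl_iff] at hfl ⊢
    haveI := hfl.1
    haveI := hfl.2
    exact ⟨isNoetherian_of_surjective β (LinearMap.range_eq_top.2 hβ),
      isArtinian_of_surjective _ β hβ⟩

section Seq
variable {W : Type u} [AddCommGroup W] [Module R W] (N : Submodule R W)

theorem inc_injective :
    Function.Injective (LinearMap.lcomp R E N.mkQ) := by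
  intro h1 h2 h
  ext x
  have := congrArg (fun (t : W →ₗ[R] E) => t x) h
  simpa using this

theorem range_inc_eq_ker_res :
    LinearMap.range (LinearMap.lcomp R E N.mkQ)
      = LinearMap.ker (LinearMap.domRestrict' (M₂ := E) N) := by
  ext g
  constructor
  · rintro ⟨h, rfl⟩
    rw [LinearMap.mem_ker]
    ext x
    have h1 : (N.mkQ : W →ₗ[R] (W ⧸ N)) x = 0 := by
      simpa [Submodule.mkQ_apply, Submodule.Quotient.mk_eq_zero] using x.2
    simp [LinearMap.lcomp_apply, h1]
  · intro hg
    rw [LinearMap.mem_ker] at hg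
    have hle : N ≤ LinearMap.ker g := by
      intro x hx
      have := congrArg (fun (t : ↥N →ₗ[R] E) => t ⟨x, hx⟩) hg
      simpa using this
    refine ⟨N.liftQ g hle, ?_⟩
    ext w
    simp [LinearMap.lcomp_apply]

theorem res_surjective (hInj : Module.Injective R E) :
    Function.Surjective (LinearMap.domRestrict' (M₂ := E) N) := by
  intro h
  obtain ⟨g, hg⟩ := ext_of_injective hInj N h
  exact ⟨g, LinearMap.ext fun x => by rw [LinearMap.domRestrict'_apply]; exact hg x⟩

end Seq

theorem dual_fl (hE : IsInjectiveHull R (DirectSum (MaximalSpectrum R)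
      fun m => R ⧸ m.asIdeal) E)
    {W : Type u} [AddCommGroup W] [Module R W] (h : IsFiniteLength R W) :
    IsFiniteLength R (W →ₗ[R] E) := by
  classical
  induction h with
  | of_subsingleton =>
    rename_i W _ _ _
    have : Subsingleton (W →ₗ[R] E) := by
      refine ⟨fun g1 g2 => LinearMap.ext fun w => ?_⟩
      rw [Subsingleton.elim w 0]
      simp
    exact .of_subsingleton
  | of_simple_quotient hN ih =>
    rename_i W _ _ N _
    apply fl_ext (LinearMap.ker (LinearMap.domRestrict' (M₂ := E) N))
    · -- kernel ≅ dual of the simple quotient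
      have e1 := LinearEquiv.ofInjective _ (inc_injective (E := E) N)
      have e2 := LinearEquiv.ofEq _ _ (range_inc_eq_ker_res (E := E) N)
      exact (e1.trans e2).isFiniteLength ((simple_struct hE (W ⧸ N) inferInstance).2)
    · -- quotient ≅ dual of N
      have e3 := (LinearMap.domRestrict' (M₂ := E) N).quotKerEquivOfSurjective
        (res_surjective N hE.1)
      exact e3.symm.isFiniteLength ih

theorem dd_surj (hE : IsInjectiveHull R (DirectSum (MaximalSpectrum R)
      fun m => R ⧸ m.asIdeal) E)
    {W : Type u} [AddCommGroup W] [Module R W] (h : IsFiniteLength R W) :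
    ∀ ξ : (W →ₗ[R] E) →ₗ[R] E, ∃ w : W, ∀ g : W →ₗ[R] E, ξ g = g w := by
  classical
  induction h with
  | of_subsingleton =>
    rename_i W _ _ _
    intro ξ
    refine ⟨0, fun g => ?_⟩
    have hg : g = 0 := LinearMap.ext fun w => by rw [Subsingleton.elim w 0]; simp
    rw [hg]
    simp
  | of_simple_quotient hN ih =>
    rename_i W _ _ N _
    intro ξ
    set res := LinearMap.domRestrict' (M₂ := E) N with hres
    set inc := LinearMap.lcomp R E N.mkQ with hinc
    obtain ⟨s, hs⟩ := (simple_struct hE (W ⧸ N) inferInstance).1 (ξ ∘ₗ inc)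
    obtain ⟨w, rfl⟩ := N.mkQ_surjective s
    -- evaluation at w
    let ev : (W →ₗ[R] E) →ₗ[R] E :=
      { toFun := fun g => g w
        map_add' := by intros; simp
        map_smul' := by intros; simp }
    have hker : LinearMap.ker res ≤ LinearMap.ker (ξ - ev) := by
      intro g hg
      rw [← range_inc_eq_ker_res] at hg
      obtain ⟨h', rfl⟩ := hg
      have h1 := hs h'
      rw [LinearMap.mem_ker, LinearMap.sub_apply]
      have h2 : ξ (inc h') = h' (N.mkQ w) := h1
      have h3 : ev (inc h') = h' (N.mkQ w) := rfl
      rw [h2, h3, sub_self]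
    obtain ⟨η, hη⟩ := factor_of_surjective res (res_surjective N hE.1) (ξ - ev) hker
    obtain ⟨n, hn⟩ := ih η
    refine ⟨w + (n : W), fun g => ?_⟩
    have h4 := hη g
    rw [LinearMap.sub_apply] at h4
    have h5 : η (res g) = g (n : W) := by
      rw [hn (res g)]
      rfl
    have h6 : ev g = g w := rfl
    have h8 : ξ g = g (n : W) + g w := by
      have h9 := sub_eq_iff_eq_add.mp h4.symm
      rw [h9, h5, h6]
    rw [h8, map_add, add_comm]

def tors {X : Type u} [AddCommGroup X] [Module R X] (I : Ideal R) : Submodule R X where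
  carrier := {x | ∀ r ∈ I, r • x = 0}
  add_mem' := by intro a b ha hb r hr; rw [smul_add, ha r hr, hb r hr, add_zero]
  zero_mem' := by intro r hr; rw [smul_zero]
  smul_mem' := by intro c x hx r hr; rw [smul_comm, hx r hr, smul_zero]

theorem mem_tors {X : Type u} [AddCommGroup X] [Module R X] {I : Ideal R} {x : X} :
    x ∈ tors (X := X) I ↔ ∀ r ∈ I, r • x = 0 := Iff.rfl

theorem art_of_tors {V : Type u} [AddCommGroup V] [Module R V] (I : Ideal R)
    (hart : IsArtinian R (R ⧸ I)) [Module.Finite R V]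
    (hIV : ∀ r ∈ I, ∀ v : V, r • v = 0) : IsArtinian R V := by
  classical
  obtain ⟨s, hs⟩ := Module.Finite.fg_top (R := R) (M := V)
  set v : (↥s) → V := fun i => (i : V) with hv
  set π : ((↥s) → R) →ₗ[R] V := Fintype.linearCombination R v with hπ
  have hπs : Function.Surjective π := by
    have hr : Set.range v = (↑s : Set V) := by
      ext x
      simp [hv]
    rw [← LinearMap.range_eq_top, hπ, Fintype.range_linearCombination, hr]
    exact hs
  set P : Submodule R ((↥s) → R) := Submodule.pi Set.univ (fun _ => I) with hP
  have hle : P ≤ LinearMap.ker π := by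
    intro c hc
    rw [LinearMap.mem_ker, hπ, Fintype.linearCombination_apply]
    exact Finset.sum_eq_zero fun i _ => hIV (c i) (hc i (Set.mem_univ i)) (v i)
  have hπ's : Function.Surjective (P.liftQ π hle) := by
    intro x
    obtain ⟨c, hc⟩ := hπs x
    exact ⟨P.mkQ c, hc⟩
  haveI : IsArtinian R ((↥s) → R ⧸ I) := inferInstance
  have e := Submodule.quotientPi (fun _ : ↥s => (I : Submodule R R))
  haveI : IsArtinian R (((↥s) → R) ⧸ P) := isArtinian_of_injective e.toLinearMap e.injective
  exact isArtinian_of_surjective _ (P.liftQ π hle) hπ's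

end Stmt9Aux

open Stmt9Aux

/-- Matlis duality for finite length submodules: with
`E = ⊕_{m maximal} E(R/m)` and `D = Hom_R(-, E)`, the assignment `Y ↦ D Y` (realized as
`Y ↦ ker (D X → D Y)`) is an inclusion-reversing bijection between finite length
submodules of a finitely generated module `X` and finite length factor modules of `D X`,
with `D X / ker(D X → D Y) ≅ D Y`. -/
theorem stmt9 (R : Type u) [CommRing R] [IsNoetherianRing R]
    (X : Type u) [AddCommGroup X] [Module R X] [Module.Finite R X]
    (E : Type u) [AddCommGroup E] [Module R E]
    (hE : IsInjectiveHull R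
      (DirectSum (MaximalSpectrum R) fun m => R ⧸ m.asIdeal) E) :
    Set.BijOn (fun Y : Submodule R X => annihilatorOf R (E := E) Y)
      {Y : Submodule R X | IsFiniteLength R Y}
      {K : Submodule R (X →ₗ[R] E) | IsFiniteLength R ((X →ₗ[R] E) ⧸ K)} ∧
    (∀ Y₁ Y₂ : Submodule R X, IsFiniteLength R Y₁ → IsFiniteLength R Y₂ → Y₁ ≤ Y₂ →
      annihilatorOf R (E := E) Y₂ ≤ annihilatorOf R (E := E) Y₁) ∧
    (∀ Y : Submodule R X, IsFiniteLength R Y →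
      Nonempty (((X →ₗ[R] E) ⧸ annihilatorOf R (E := E) Y) ≃ₗ[R] (Y →ₗ[R] E))) := by
  classical
  have hInj : Module.Injective R E := hE.1
  have mem_ann : ∀ (Y : Submodule R X) (g : X →ₗ[R] E),
      g ∈ annihilatorOf R (E := E) Y ↔ ∀ y ∈ Y, g y = 0 := fun Y g => Iff.rfl
  have ann_eq_ker : ∀ Y : Submodule R X,
      annihilatorOf R (E := E) Y = LinearMap.ker (LinearMap.domRestrict' (M₂ := E) Y) := by
    intro Y
    ext g
    rw [mem_ann, LinearMap.mem_ker]
    constructor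
    · intro hg
      ext y
      simpa using hg y.1 y.2
    · intro hg y hy
      have := congrArg (fun t : ↥Y →ₗ[R] E => t ⟨y, hy⟩) hg
      simpa using this
  have equiv3 : ∀ Y : Submodule R X,
      Nonempty (((X →ₗ[R] E) ⧸ annihilatorOf R (E := E) Y) ≃ₗ[R] (↥Y →ₗ[R] E)) := by
    intro Y
    exact ⟨(Submodule.quotEquivOfEq _ _ (ann_eq_ker Y)).trans
      ((LinearMap.domRestrict' (M₂ := E) Y).quotKerEquivOfSurjective (res_surjective Y hInj))⟩
  have mapsTo : ∀ Y : Submodule R X, IsFiniteLength R ↥Y →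
      IsFiniteLength R ((X →ₗ[R] E) ⧸ annihilatorOf R (E := E) Y) := by
    intro Y hY
    obtain ⟨e⟩ := equiv3 Y
    exact e.symm.isFiniteLength (dual_fl hE hY)
  have perp_ann : ∀ Y : Submodule R X, perp (annihilatorOf R (E := E) Y) = Y := by
    intro Y
    apply le_antisymm
    · intro x hx
      by_contra hxY
      have hx0 : Y.mkQ x ≠ 0 := by
        simpa [Submodule.Quotient.mk_eq_zero] using hxY
      obtain ⟨φ, hφ⟩ := cogen hE hx0
      have hg : (φ ∘ₗ Y.mkQ) ∈ annihilatorOf R (E := E) Y := by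
        intro y hy
        have h0 : Y.mkQ y = 0 := by
          simpa [Submodule.Quotient.mk_eq_zero] using hy
        simp [h0]
      exact hφ (hx (φ ∘ₗ Y.mkQ) hg)
    · intro y hy g hg
      exact hg y hy
  refine ⟨⟨fun Y hY => mapsTo Y hY, ?_, ?_⟩, ?_, fun Y hY => equiv3 Y⟩
  · -- InjOn
    intro Y1 _ Y2 _ heq
    rw [← perp_ann Y1, ← perp_ann Y2]
    exact congrArg perp heq
  · -- SurjOn
    intro K hK
    simp only [Set.mem_setOf_eq] at hK
    obtain ⟨hKn, hKa⟩ := isFiniteLength_iff_isNoetherian_isArtinian.mp hK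
    haveI := hKn
    haveI := hKa
    have hMfin : Module.Finite R ((X →ₗ[R] E) ⧸ K) := ⟨IsNoetherian.noetherian ⊤⟩
    obtain ⟨s, hs⟩ := hMfin.fg_top
    set β : R →ₗ[R] ((↥s) → ((X →ₗ[R] E) ⧸ K)) :=
      LinearMap.pi (fun i => LinearMap.toSpanSingleton R _ (i : (X →ₗ[R] E) ⧸ K)) with hβ
    set I : Ideal R := LinearMap.ker β with hI
    have hIann : ∀ r ∈ I, ∀ mm : (X →ₗ[R] E) ⧸ K, r • mm = 0 := by
      intro r hr mm
      have hmem : mm ∈ Submodule.span R (↑s : Set ((X →ₗ[R] E) ⧸ K)) := by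
        rw [hs]; exact Submodule.mem_top
      induction hmem using Submodule.span_induction with
      | mem x hx =>
        have h0 := congrArg (fun v => v ⟨x, hx⟩) (LinearMap.mem_ker.mp hr)
        simpa [hβ] using h0
      | zero => rw [smul_zero]
      | add a b ha hb iha ihb => rw [smul_add, iha, ihb, add_zero]
      | smul c a ha ihha => rw [smul_comm, ihha, smul_zero]
    have hIK : ∀ r ∈ I, ∀ φ : X →ₗ[R] E, r • φ ∈ K := by
      intro r hr φ
      have h1 : K.mkQ (r • φ) = 0 := by
        rw [map_smul]
        exact hIann r hr (K.mkQ φ)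
      rwa [Submodule.mkQ_apply, Submodule.Quotient.mk_eq_zero] at h1
    set W : Submodule R X := tors I with hWdef
    haveI : IsNoetherian R X := inferInstance
    have hart : IsArtinian R (R ⧸ I) := by
      have hinj : Function.Injective (I.liftQ β le_rfl) := by
        rw [← LinearMap.ker_eq_bot]
        exact Submodule.ker_liftQ_eq_bot _ _ _ le_rfl
      exact isArtinian_of_injective _ hinj
    have hWfl : IsFiniteLength R ↥W := by
      rw [fl_iff]
      refine ⟨inferInstance, ?_⟩
      haveI : Module.Finite R ↥W := ⟨IsNoetherian.noetherian ⊤⟩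
      refine art_of_tors I hart ?_
      intro r hr w
      apply Subtype.ext
      have := w.2 r hr
      simpa using this
    have hYW : perp K ≤ W := by
      intro x hx
      intro r hr
      by_contra h0
      obtain ⟨φ, hφ⟩ := cogen hE h0
      apply hφ
      have h1 : (r • φ) x = φ (r • x) := by
        rw [LinearMap.smul_apply, map_smul]
      rw [← h1]
      exact hx (r • φ) (hIK r hr φ)
    have hW3 : ∀ g : X →ₗ[R] E, (∀ x ∈ W, g x = 0) → g ∈ K := by
      intro g hg
      obtain ⟨t, ht⟩ := IsNoetherian.noetherian I
      set α : X →ₗ[R] ((↥t) → X) :=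
        LinearMap.pi (fun i : ↥t => LinearMap.lsmul R X (i : R)) with hα
      have hkerα : LinearMap.ker α ≤ LinearMap.ker g := by
        intro x hxk
        have hxt : ∀ c ∈ t, c • x = 0 := by
          intro c hc
          have h0 := congrArg (fun v => v ⟨c, hc⟩) (LinearMap.mem_ker.mp hxk)
          simpa [hα] using h0
        have hxW : x ∈ W := by
          intro r hr
          rw [← ht] at hr
          induction hr using Submodule.span_induction with
          | mem c hc => exact hxt c hc
          | zero => rw [zero_smul]
          | add a b ha hb iha ihb => rw [add_smul, iha, ihb, add_zero]
          | smul c a ha ihha => rw [smul_eq_mul, mul_smul, ihha, smul_zero]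
        exact LinearMap.mem_ker.mpr (hg x hxW)
      have hinj : Function.Injective ((LinearMap.ker α).liftQ α le_rfl) := by
        rw [← LinearMap.ker_eq_bot]
        exact Submodule.ker_liftQ_eq_bot _ _ _ le_rfl
      obtain ⟨ht', hht⟩ := hInj.out _ hinj ((LinearMap.ker α).liftQ g hkerα)
      have heval : ∀ x : X, ht' (α x) = g x := fun x => hht ((LinearMap.ker α).mkQ x)
      have hgsum : g = ∑ i : ↥t,
          (i : R) • (ht' ∘ₗ LinearMap.single R (fun _ : ↥t => X) i) := by
        ext x
        rw [← heval x]
        have hαx : α x = ∑ i : ↥t, Pi.single i ((i : R) • x) := by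
          rw [← Finset.univ_sum_single (α x)]
          exact Finset.sum_congr rfl fun i _ => by simp [hα]
        rw [hαx, map_sum]
        rw [LinearMap.sum_apply]
        refine Finset.sum_congr rfl fun i _ => ?_
        rw [LinearMap.smul_apply, LinearMap.comp_apply]
        have hps : Pi.single i ((i : R) • x) = (i : R) • (Pi.single i x : (↥t) → X) :=
          Pi.single_smul (f := fun _ : ↥t => X) i ((i : R)) x
        rw [hps, map_smul]
        rfl
      rw [hgsum]
      apply Submodule.sum_mem
      intro i _
      exact hIK (i : R) (by rw [← ht]; exact Submodule.subset_span i.2) _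
    set Y := perp (E := E) K with hYdef
    have hYfl : IsFiniteLength R ↥Y := by
      have e := Submodule.comapSubtypeEquivOfLe hYW
      refine e.isFiniteLength ?_
      obtain ⟨hn, ha⟩ := fl_iff.mp hWfl
      haveI := hn
      haveI := ha
      rw [fl_iff]
      exact ⟨inferInstance, inferInstance⟩
    have hannY : annihilatorOf R (E := E) Y = K := by
      apply le_antisymm
      · intro g hg
        set ρ := LinearMap.domRestrict' (M₂ := E) W with hρ
        by_cases hmem : ρ g ∈ Submodule.map ρ K
        · obtain ⟨k, hk, hkeq⟩ := hmem
          have h2 : g - k ∈ K := by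
            refine hW3 _ (fun x hx => ?_)
            have h3 : ρ (g - k) = 0 := by rw [map_sub, hkeq, sub_self]
            have h4 := congrArg (fun u : ↥W →ₗ[R] E => u ⟨x, hx⟩) h3
            simpa [hρ] using h4
          have h5 := K.add_mem h2 hk
          simpa using h5
        · exfalso
          have hne : (Submodule.map ρ K).mkQ (ρ g) ≠ 0 := by
            simpa [Submodule.Quotient.mk_eq_zero] using hmem
          obtain ⟨Ξ, hΞ⟩ := cogen hE hne
          obtain ⟨w, hw⟩ := dd_surj hE hWfl (Ξ ∘ₗ (Submodule.map ρ K).mkQ)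
          have hwY : (w : X) ∈ Y := by
            intro k' hk'
            have h3 : (Ξ ∘ₗ (Submodule.map ρ K).mkQ) (ρ k') = 0 := by
              have h6 : (Submodule.map ρ K).mkQ (ρ k') = 0 := by
                rw [Submodule.mkQ_apply, Submodule.Quotient.mk_eq_zero]
                exact ⟨k', hk', rfl⟩
              rw [LinearMap.comp_apply, h6, map_zero]
            have h7 := hw (ρ k')
            rw [h3] at h7
            exact h7.symm
          apply hΞ
          have h8 := hw (ρ g)
          have h9 : (ρ g) w = g (w : X) := rfl
          rw [h9] at h8
          have h10 : g (w : X) = 0 := hg _ hwY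
          rw [h10] at h8
          exact h8
      · intro k hk y hy
        exact hy k hk
    exact ⟨Y, hYfl, hannY⟩
  · -- inclusion reversing
    intro Y1 Y2 _ _ hle g hg y hy
    exact hg y (hle hy)


end
end

section
/- Let R be a commutative Noetherian ring and M, N finitely generated R-modules. Then add M ⊆ add N if and only if add M_p ⊆ add N_p for all prime ideals p, if and only if add M_m ⊆ add N_m for all maximal ideals m. -/
open RingTheory IsLocalRing CategoryTheory Opposite

noncomputable section

universe u v

/-- The depth of a module over a Noetherian local ring: the supremum of lengths of
`M`-regular sequences contained in the maximal ideal. -/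
def moduleDepth (R : Type u) [CommRing R] [IsLocalRing R]
    (M : Type v) [AddCommGroup M] [Module R M] : ℕ∞ :=
  sSup {n : ℕ∞ | ∃ rs : List R, (rs.length : ℕ∞) = n ∧
    (∀ r ∈ rs, r ∈ maximalIdeal R) ∧ RingTheory.Sequence.IsRegular M rs}

/-- `M` is a maximal Cohen–Macaulay `R`-module: at every prime `p`,
the depth of `M_p` over `R_p` equals `dim R_p`. -/
def IsMCM (R : Type u) [CommRing R] (M : Type v) [AddCommGroup M] [Module R M] : Prop :=
  ∀ p : PrimeSpectrum R,
    (moduleDepth (Localization.AtPrime p.asIdeal)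
        (LocalizedModule p.asIdeal.primeCompl M) : WithBot ℕ∞)
      = ringKrullDim (Localization.AtPrime p.asIdeal)

/-- `R` is a Cohen–Macaulay ring. -/
def IsCMRing (R : Type u) [CommRing R] : Prop := IsMCM R R

/-- All maximal ideals of `R` have the same height. -/
def IsEquicodimensional (R : Type u) [CommRing R] : Prop :=
  ∀ p q : PrimeSpectrum R, p.asIdeal.IsMaximal → q.asIdeal.IsMaximal →
    Order.height p = Order.height q

/-- `M` lies in `add N`: `M` is a direct summand of a finite direct sum of copies of `N`. -/
def InAdd (A : Type*) [Semiring A] (M : Type*) [AddCommMonoid M] [Module A M]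
    (N : Type*) [AddCommMonoid N] [Module A N] : Prop :=
  ∃ (n : ℕ) (i : M →ₗ[A] (Fin n → N)) (p : (Fin n → N) →ₗ[A] M),
    p ∘ₗ i = LinearMap.id

section PiLoc

variable {R : Type u} [CommRing R] (S : Submonoid R)
variable {M N P : Type u} [AddCommGroup M] [Module R M] [AddCommGroup N] [Module R N]
  [AddCommGroup P] [Module R P]

lemma locMap_comp (i : M →ₗ[R] N) (p : N →ₗ[R] P) :
    LocalizedModule.map S (p ∘ₗ i) = (LocalizedModule.map S p) ∘ₗ (LocalizedModule.map S i) := by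
  ext x
  induction x using LocalizedModule.induction_on with
  | _ m s => simp

variable (N) (n : ℕ)

/-- Localization commutes with finite products. -/
def locPiEquiv : LocalizedModule S (Fin n → N) ≃ₗ[Localization S] (Fin n → LocalizedModule S N) :=
  LinearEquiv.ofLinear
    (LinearMap.pi fun t => LocalizedModule.map S (LinearMap.proj t))
    (∑ t, (LocalizedModule.map S (LinearMap.single R (fun _ : Fin n => N) t)).comp
      (LinearMap.proj t))
    (by
      refine LinearMap.ext fun v => ?_
      funext j
      simp only [LinearMap.comp_apply, LinearMap.pi_apply, LinearMap.sum_apply, map_sum,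
        LinearMap.id_apply]
      rw [Finset.sum_eq_single j]
      · rw [← LinearMap.comp_apply, ← locMap_comp, LinearMap.proj_comp_single_same,
          LocalizedModule.map_id]
        rfl
      · intro t _ ht
        have hz : (LinearMap.proj j).comp (LinearMap.single R (fun _ : Fin n => N) t) = 0 :=
          LinearMap.ext fun y => by simp [Pi.single_eq_of_ne ht.symm]
        rw [← LinearMap.comp_apply, ← locMap_comp, hz, map_zero]
        rfl
      · simp)
    (by
      apply LinearMap.restrictScalars_injective R
      apply IsLocalizedModule.ext S (LocalizedModule.mkLinearMap S (Fin n → N))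
        (IsLocalizedModule.map_units (LocalizedModule.mkLinearMap S (Fin n → N)))
      refine LinearMap.ext fun x => ?_
      simp only [LinearMap.comp_apply, LinearMap.coe_restrictScalars,
        LocalizedModule.mkLinearMap_apply, LinearMap.pi_apply, LinearMap.sum_apply,
        LocalizedModule.map_mk, LinearMap.id_apply]
      simp only [LinearMap.pi_apply, LinearMap.proj_apply, LocalizedModule.map_mk]
      have h1 : ∀ t : Fin n, LocalizedModule.mk (LinearMap.single R (fun _ : Fin n => N) t
          (x t)) (1 : S)
          = (LocalizedModule.mkLinearMap S (Fin n → N)).comp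
              (LinearMap.single R (fun _ : Fin n => N) t ∘ₗ LinearMap.proj t) x := fun t => rfl
      rw [Finset.sum_congr rfl fun t _ => h1 t, ← LinearMap.sum_apply]
      have h2 : (∑ t : Fin n, (LocalizedModule.mkLinearMap S (Fin n → N)).comp
          (LinearMap.single R (fun _ : Fin n => N) t ∘ₗ LinearMap.proj t)) x
          = LocalizedModule.mkLinearMap S (Fin n → N)
              (∑ t : Fin n, Pi.single t (x t)) := by
        simp [LinearMap.sum_apply]
      rw [h2, Finset.univ_sum_single]
      rfl)

lemma locPiEquiv_mk (x : Fin n → N) (s : S) :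
    locPiEquiv S N n (LocalizedModule.mk x s) = fun t => LocalizedModule.mk (x t) s := by
  funext t
  simp [locPiEquiv]

theorem inAdd_localized (hMN : _root_.InAdd R M N) :
    _root_.InAdd (Localization S) (LocalizedModule S M) (LocalizedModule S N) := by
  obtain ⟨n, i, p, hpi⟩ := hMN
  refine ⟨n, (locPiEquiv S N n).toLinearMap ∘ₗ LocalizedModule.map S i,
    LocalizedModule.map S p ∘ₗ (locPiEquiv S N n).symm.toLinearMap, ?_⟩
  refine LinearMap.ext fun x => ?_
  simp only [LinearMap.comp_apply, LinearEquiv.coe_coe, LinearEquiv.symm_apply_apply,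
    LinearMap.id_apply]
  rw [← LinearMap.comp_apply, ← locMap_comp, hpi, LocalizedModule.map_id, LinearMap.id_apply]

end PiLoc

section Hard

variable {R : Type u} [CommRing R] [IsNoetherianRing R]
variable {M N : Type u} [AddCommGroup M] [Module R M] [Module.Finite R M]
  [AddCommGroup N] [Module R N] [Module.Finite R N]

theorem inAdd_of_forall_maximal
    (H : ∀ m : MaximalSpectrum R,
      InAdd (Localization.AtPrime m.asIdeal) (LocalizedModule m.asIdeal.primeCompl M)
        (LocalizedModule m.asIdeal.primeCompl N)) : InAdd R M N := by
  haveI : Module.Finite R (N →ₗ[R] M) := ⟨IsNoetherian.noetherian ⊤⟩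
  obtain ⟨n, h, hspan⟩ := Module.Finite.exists_fin (R := R) (M := N →ₗ[R] M)
  haveI : Module.FinitePresentation R M := Module.finitePresentation_of_finite R M
  haveI : Module.FinitePresentation R N := Module.finitePresentation_of_finite R N
  set p : (Fin n → N) →ₗ[R] M := ∑ t, (h t) ∘ₗ LinearMap.proj t with hp
  suffices key : ∀ (I : Ideal R) (_ : I.IsMaximal),
      ∃ (g : _ →ₗ[Localization.AtPrime I] _),
        (LocalizedModule.map I.primeCompl p).comp g = LinearMap.id by
    obtain ⟨g, hg⟩ := LinearMap.split_surjective_of_localization_maximal p key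
    exact ⟨n, g, p, hg⟩
  intro I hI
  haveI := hI
  set S := I.primeCompl with hS
  set Loc := Localization.AtPrime I with hLoc
  obtain ⟨k, i₀, p₀, hip⟩ := H ⟨I, hI⟩
  set fN := LocalizedModule.mkLinearMap S N with hfN
  set fM := LocalizedModule.mkLinearMap S M with hfM
  -- lift the components of p₀ along the localization of Hom modules
  have hsurj : ∀ j : Fin k, ∃ x : (N →ₗ[R] M) × S,
      x.2 • ((p₀ ∘ₗ LinearMap.single Loc (fun _ : Fin k => LocalizedModule S N) j).restrictScalars R)
        = IsLocalizedModule.map S fN fM x.1 :=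
    fun j => IsLocalizedModule.surj S (IsLocalizedModule.map S fN fM) _
  choose qs hq using hsurj
  -- write each lift in terms of the generators of Hom(N, M)
  have ha : ∀ j, ∃ a : Fin n → R, ∑ t, a t • h t = (qs j).1 := by
    intro j
    have : (qs j).1 ∈ Submodule.span R (Set.range h) := hspan ▸ Submodule.mem_top
    exact (Submodule.mem_span_range_iff_exists_fun R).mp this
  choose a ha using ha
  set w : Fin n → (LocalizedModule S M →ₗ[Loc] LocalizedModule S N) := fun t =>
    ∑ j, ((IsLocalization.mk' Loc (1 : R) (qs j).2) * algebraMap R Loc (a j t)) •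
      ((LinearMap.proj j).comp i₀) with hw
  refine ⟨(locPiEquiv S N n).symm.toLinearMap ∘ₗ LinearMap.pi w, ?_⟩
  -- key computation
  have hPe : LocalizedModule.map S p
      = (∑ t, (LocalizedModule.map S (h t)) ∘ₗ LinearMap.proj t) ∘ₗ (locPiEquiv S N n).toLinearMap := by
    apply LinearMap.restrictScalars_injective R
    apply IsLocalizedModule.ext S (LocalizedModule.mkLinearMap S (Fin n → N))
      (IsLocalizedModule.map_units fM)
    refine LinearMap.ext fun x => ?_
    have e1 := locPiEquiv_mk S N n x (1 : S)
    simp only [LinearMap.comp_apply, LinearMap.coe_restrictScalars,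
      LocalizedModule.mkLinearMap_apply, LinearEquiv.coe_coe, e1, LinearMap.sum_apply,
      LocalizedModule.map_mk, LinearMap.proj_apply]
    have e2 : ∀ t : Fin n, LocalizedModule.mk ((h t) (x t)) (1 : S) = fM ((h t) (x t)) :=
      fun _ => rfl
    rw [Finset.sum_congr rfl fun t _ => e2 t, ← map_sum]
    show fM (p x) = fM (∑ t, (h t) (x t))
    congr 1
    simp [hp]
  refine LinearMap.ext fun x => ?_
  simp only [LinearMap.comp_apply, LinearEquiv.coe_coe, LinearMap.id_apply]
  rw [← LinearEquiv.coe_coe, ← LinearMap.comp_apply (LocalizedModule.map S p), hPe]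
  simp only [LinearMap.comp_apply, LinearEquiv.coe_coe, LinearEquiv.apply_symm_apply,
    LinearMap.sum_apply, LinearMap.proj_apply, LinearMap.pi_apply]
  have hterm : ∀ t, (LocalizedModule.map S (h t)) ((w t) x)
      = ∑ j, (IsLocalization.mk' Loc 1 (qs j).2 * algebraMap R Loc (a j t)) •
          (LocalizedModule.map S (h t)) ((i₀ x) j) := by
    intro t
    rw [hw]
    simp only [LinearMap.sum_apply, LinearMap.smul_apply, LinearMap.comp_apply,
      LinearMap.proj_apply, map_sum, map_smul]
  rw [Finset.sum_congr rfl fun t _ => hterm t, Finset.sum_comm]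
  have hj : ∀ j, ∑ t, (IsLocalization.mk' Loc 1 (qs j).2 * algebraMap R Loc (a j t)) •
      (LocalizedModule.map S (h t)) ((i₀ x) j) = p₀ (Pi.single j ((i₀ x) j)) := by
    intro j
    have step1 : ∑ t, (IsLocalization.mk' Loc 1 (qs j).2 * algebraMap R Loc (a j t)) •
        (LocalizedModule.map S (h t)) ((i₀ x) j)
        = IsLocalization.mk' Loc 1 (qs j).2 •
            ∑ t, a j t • (LocalizedModule.map S (h t)) ((i₀ x) j) := by
      rw [Finset.smul_sum]
      refine Finset.sum_congr rfl fun t _ => ?_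
      rw [mul_smul, algebraMap_smul]
    have step2 : ∑ t, a j t • (LocalizedModule.map S (h t)) ((i₀ x) j)
        = (LocalizedModule.map S ((qs j).1)) ((i₀ x) j) := by
      rw [← ha j]
      simp only [map_sum, map_smul, LinearMap.sum_apply, LinearMap.smul_apply]
    have step3 : (LocalizedModule.map S ((qs j).1)) ((i₀ x) j)
        = (((qs j).2 : R)) • p₀ (Pi.single j ((i₀ x) j)) := by
      have hfun : (LocalizedModule.map S ((qs j).1)) ((i₀ x) j)
          = (IsLocalizedModule.map S fN fM ((qs j).1)) ((i₀ x) j) := rfl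
      rw [hfun, ← hq j]
      rfl
    rw [step1, step2, step3, ← algebraMap_smul Loc ((qs j).2 : R), ← mul_smul,
      IsLocalization.mk'_spec, map_one, one_smul]
  rw [Finset.sum_congr rfl fun j _ => hj j, ← map_sum]
  rw [Finset.univ_sum_single]
  exact LinearMap.congr_fun hip x

end Hard

/-- `add M ⊆ add N` can be checked at all primes, or at all maximal ideals. -/
theorem stmt13 (R : Type u) [CommRing R] [IsNoetherianRing R]
    (M N : Type u) [AddCommGroup M] [Module R M] [Module.Finite R M]
    [AddCommGroup N] [Module R N] [Module.Finite R N] :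
    (InAdd R M N ↔ ∀ p : PrimeSpectrum R,
      InAdd (Localization.AtPrime p.asIdeal) (LocalizedModule p.asIdeal.primeCompl M)
        (LocalizedModule p.asIdeal.primeCompl N)) ∧
    (InAdd R M N ↔ ∀ m : MaximalSpectrum R,
      InAdd (Localization.AtPrime m.asIdeal) (LocalizedModule m.asIdeal.primeCompl M)
        (LocalizedModule m.asIdeal.primeCompl N)) := by
  have easy : ∀ (S : Submonoid R), InAdd R M N →
      InAdd (Localization S) (LocalizedModule S M) (LocalizedModule S N) :=
    fun S hmn => inAdd_localized S N hmn
  have hard : (∀ m : MaximalSpectrum R,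
      InAdd (Localization.AtPrime m.asIdeal) (LocalizedModule m.asIdeal.primeCompl M)
        (LocalizedModule m.asIdeal.primeCompl N)) → InAdd R M N :=
    inAdd_of_forall_maximal
  constructor
  · exact ⟨fun hmn q => easy _ hmn,
      fun hloc => hard fun m => hloc ⟨m.asIdeal, m.isMaximal.isPrime⟩⟩
  · exact ⟨fun hmn m => easy _ hmn, hard⟩

end
end

section
/- Let R be a commutative Noetherian ring, M and N finitely generated R-modules, f: M^{⊕m} → N a right add M-approximation of N, and g: N^{⊕n} → M a right add N-approximation of M. Then M ∈ add N if and only if the composite M^{⊕mn} → N^{⊕n} → M induces a surjection Hom_R(M, M^{⊕mn}) → End_R(M). -/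
open RingTheory IsLocalRing CategoryTheory Opposite

noncomputable section

universe u v

/-- given a right `add M`-approximation `f : M^m → N` and a right
`add N`-approximation `g : N^n → M`, one has `M ∈ add N` iff the composite
`M^{mn} → N^n → M` induces a surjection `Hom(M, M^{mn}) → End(M)`. -/
theorem stmt14 (R : Type u) [CommRing R] [IsNoetherianRing R]
    (M N : Type u) [AddCommGroup M] [Module R M] [Module.Finite R M]
    [AddCommGroup N] [Module R N] [Module.Finite R N]
    (m n : ℕ) (f : (Fin m → M) →ₗ[R] N)
    (hf : ∀ h : M →ₗ[R] N, ∃ k : M →ₗ[R] (Fin m → M), h = f ∘ₗ k)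
    (g : (Fin n → N) →ₗ[R] M)
    (hg : ∀ h : N →ₗ[R] M, ∃ k : N →ₗ[R] (Fin n → N), h = g ∘ₗ k) :
    InAdd R M N ↔
      ∀ φ : M →ₗ[R] M, ∃ ψ : M →ₗ[R] (Fin n → Fin m → M),
        φ = (g ∘ₗ LinearMap.pi (fun i => f ∘ₗ LinearMap.proj i)) ∘ₗ ψ := by
  constructor
  · rintro ⟨k, i, p, hpi⟩ φ
    choose q hq using fun j : Fin k => hg (p ∘ₗ LinearMap.single R (fun _ => N) j)
    set α : M →ₗ[R] (Fin n → N) :=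
      (∑ j, (q j) ∘ₗ (LinearMap.proj j : (Fin k → N) →ₗ[R] N)) ∘ₗ i ∘ₗ φ with hα
    choose ψi hψi using fun l : Fin n => hf ((LinearMap.proj l) ∘ₗ α)
    refine ⟨LinearMap.pi ψi, ?_⟩
    ext x
    have h1 : (fun l => f (ψi l x)) = α x := by
      funext l
      have := congrArg (fun h => h x) (hψi l)
      simpa using this.symm
    have h2 : g (α x) = φ x := by
      have hx : i (φ x) = ∑ j, Pi.single j (i (φ x) j) := by
        simp [Finset.univ_sum_single]
      simp only [hα, LinearMap.comp_apply, LinearMap.sum_apply, map_sum,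
        LinearMap.proj_apply]
      calc ∑ j, g (q j (i (φ x) j))
          = ∑ j, p (Pi.single j (i (φ x) j)) := by
            refine Finset.sum_congr rfl fun j _ => ?_
            have := congrArg (fun h => h (i (φ x) j)) (hq j)
            exact this.symm
        _ = p (i (φ x)) := by rw [← map_sum, ← hx]
        _ = φ x := by
            have := congrArg (fun h => h (φ x)) hpi
            simpa using this
    have h3 : (LinearMap.pi fun l => f ∘ₗ LinearMap.proj l) ((LinearMap.pi ψi) x) = α x := by
      funext l
      simpa using congrFun h1 l
    simp only [LinearMap.comp_apply, h3]
    exact h2.symm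
  · intro h
    obtain ⟨ψ, hψ⟩ := h LinearMap.id
    exact ⟨n, (LinearMap.pi (fun i => f ∘ₗ LinearMap.proj i)) ∘ₗ ψ, g, by
      rw [← LinearMap.comp_assoc]; exact hψ.symm⟩

end
end
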